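/- Suppose $E, A, B : [0,T] \to [0,\infty)$ are continuous functions satisfying: (i) $E(t) \le E(0) + c_1 A(t) + c_1 B(t)$, (ii) $B(t)^2 \le c_2 + 3E(t) + c_2 A(t)$, and (iii) $A(t)^2 \le c_3 B(t) + c_3 + 2E(t) + c_3 E(t)^{\frac{p+2}{2}}$ for constants $c_1,c_2,c_3 \ge 0$ and $0 < p < 2$. Then there exists a constant $M < \infty$ (depending only on $c_1,c_2,c_3,p,E(0)$) such that $E(t) \le M$ for all $t \in [0,T]$. -/
import Mathlib


open Set

/-- Nonlinear bootstrap: if continuous nonnegative functions `E, A, B` on `[0,T]` satisfy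
(i) `E(t) ≤ E(0) + c₁A(t) + c₁B(t)`, (ii) `B(t)² ≤ c₂ + 3E(t) + c₂A(t)`, and
(iii) `A(t)² ≤ c₃B(t) + c₃ + 2E(t) + c₃E(t)^{(p+2)/2}` with `0 < p < 2`, then `E` is
bounded by a constant `M` depending only on `c₁, c₂, c₃, p` and a bound `E₀` on `E(0)`. -/
theorem bootstrap_bound (c1 c2 c3 p E0 : ℝ) (hc1 : 0 ≤ c1) (hc2 : 0 ≤ c2) (hc3 : 0 ≤ c3)
    (hp0 : 0 < p) (hp2 : p < 2) :
    ∃ M : ℝ, ∀ (T : ℝ) (E A B : ℝ → ℝ), 0 < T →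
      ContinuousOn E (Set.Icc 0 T) → ContinuousOn A (Set.Icc 0 T) →
      ContinuousOn B (Set.Icc 0 T) →
      (∀ t ∈ Set.Icc (0:ℝ) T, 0 ≤ E t ∧ 0 ≤ A t ∧ 0 ≤ B t) →
      (∀ t ∈ Set.Icc (0:ℝ) T, E t ≤ E 0 + c1 * A t + c1 * B t) →
      (∀ t ∈ Set.Icc (0:ℝ) T, B t ^ 2 ≤ c2 + 3 * E t + c2 * A t) →
      (∀ t ∈ Set.Icc (0:ℝ) T, A t ^ 2 ≤ c3 * B t + c3 + 2 * E t + c3 * E t ^ ((p + 2)/2)) →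
      E 0 ≤ E0 →
      ∀ t ∈ Set.Icc (0:ℝ) T, E t ≤ M := by
  set ρ : ℝ := (p + 2) / 2 with hρdef
  have hρ1 : 1 ≤ ρ := by rw [hρdef]; linarith
  have hρ0 : 0 ≤ ρ := by linarith
  have hρ2 : ρ < 2 := by rw [hρdef]; linarith
  set s : ℝ := ρ / 2 with hsdef
  have hs1 : s < 1 := by rw [hsdef]; linarith
  have hs0 : 0 ≤ s := by rw [hsdef]; linarith
  have h1s : 0 < 1 - s := by linarith
  set K : ℝ := 1 + max E0 0 + (1 + c1) * Real.sqrt (3 * c3 + 2)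
      + (1 + c1) * Real.sqrt (2 * c2 + 3) with hKdef
  have hsq3 : (0:ℝ) ≤ Real.sqrt (3 * c3 + 2) := Real.sqrt_nonneg _
  have hsq2 : (0:ℝ) ≤ Real.sqrt (2 * c2 + 3) := Real.sqrt_nonneg _
  have hmax0 : (0:ℝ) ≤ max E0 0 := le_max_right _ _
  have hK1 : 1 ≤ K := by
    rw [hKdef]
    linarith [mul_nonneg (by linarith : (0:ℝ) ≤ 1 + c1) hsq3,
      mul_nonneg (by linarith : (0:ℝ) ≤ 1 + c1) hsq2]
  refine ⟨K ^ (1 / (1 - s)), ?_⟩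
  intro T E A B hT _ _ _ hpos h1 h2 h3 hE0 t ht
  obtain ⟨he0, ha0, hb0⟩ := hpos t ht
  set e := E t
  set a := A t
  set b := B t
  set X : ℝ := max (max e a) (max b 1) with hXdef
  have hX1 : 1 ≤ X := le_trans (le_max_right b 1) (le_max_right _ _)
  have hX0 : 0 < X := lt_of_lt_of_le one_pos hX1
  have heX : e ≤ X := le_trans (le_max_left e a) (le_max_left _ _)
  have haX : a ≤ X := le_trans (le_max_right e a) (le_max_left _ _)
  have hbX : b ≤ X := le_trans (le_max_left b 1) (le_max_right _ _)
  -- X ≤ X ^ ρ and related rpow facts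
  have hXρ1 : 1 ≤ X ^ ρ := by
    calc (1:ℝ) = X ^ (0:ℝ) := by rw [Real.rpow_zero]
    _ ≤ X ^ ρ := Real.rpow_le_rpow_of_exponent_le hX1 hρ0
  have hXXρ : X ≤ X ^ ρ := by
    calc X = X ^ (1:ℝ) := by rw [Real.rpow_one]
    _ ≤ X ^ ρ := Real.rpow_le_rpow_of_exponent_le hX1 hρ1
  have hXρ0 : 0 ≤ X ^ ρ := by positivity
  have heρ : e ^ ρ ≤ X ^ ρ := Real.rpow_le_rpow he0 heX hρ0
  have hXs1 : 1 ≤ X ^ s := by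
    calc (1:ℝ) = X ^ (0:ℝ) := by rw [Real.rpow_zero]
    _ ≤ X ^ s := Real.rpow_le_rpow_of_exponent_le hX1 hs0
  have hXs0 : 0 < X ^ s := lt_of_lt_of_le one_pos hXs1
  have hsqXρ : Real.sqrt (X ^ ρ) = X ^ s := by
    rw [Real.sqrt_eq_rpow, ← Real.rpow_mul hX0.le]
    congr 1
    rw [hsdef]; ring
  -- bound b
  have hb2 : b ^ 2 ≤ (2 * c2 + 3) * X ^ ρ := by
    have hh := h2 t ht
    have t1 : c2 ≤ c2 * X ^ ρ := by
      have := mul_le_mul_of_nonneg_left hXρ1 hc2; linarith [mul_one c2]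
    have t2 : 3 * e ≤ 3 * X ^ ρ := by linarith [le_trans heX hXXρ]
    have t3 : c2 * a ≤ c2 * X ^ ρ :=
      mul_le_mul_of_nonneg_left (le_trans haX hXXρ) hc2
    linarith
  have hbb : b ≤ Real.sqrt (2 * c2 + 3) * X ^ s := by
    have h := Real.sqrt_le_sqrt hb2
    rwa [Real.sqrt_sq hb0, Real.sqrt_mul (by linarith) _, hsqXρ] at h
  -- bound a
  have ha2 : a ^ 2 ≤ (3 * c3 + 2) * X ^ ρ := by
    have := h3 t ht
    have hb' : c3 * b ≤ c3 * X ^ ρ :=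
      mul_le_mul_of_nonneg_left (le_trans hbX hXXρ) hc3
    have h1' : c3 ≤ c3 * X ^ ρ := by
      have := mul_le_mul_of_nonneg_left hXρ1 hc3; linarith [mul_one c3]
    have he' : e ≤ X ^ ρ := le_trans heX hXXρ
    have heρ' : c3 * e ^ ρ ≤ c3 * X ^ ρ := mul_le_mul_of_nonneg_left heρ hc3
    linarith
  have haa : a ≤ Real.sqrt (3 * c3 + 2) * X ^ s := by
    have h := Real.sqrt_le_sqrt ha2
    rwa [Real.sqrt_sq ha0, Real.sqrt_mul (by linarith) _, hsqXρ] at h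
  -- bound e
  have hE00 : E 0 ≤ max E0 0 := le_trans hE0 (le_max_left _ _)
  have hee : e ≤ K * X ^ s := by
    have := h1 t ht
    have hca : c1 * a ≤ c1 * (Real.sqrt (3 * c3 + 2) * X ^ s) :=
      mul_le_mul_of_nonneg_left haa hc1
    have hcb : c1 * b ≤ c1 * (Real.sqrt (2 * c2 + 3) * X ^ s) :=
      mul_le_mul_of_nonneg_left hbb hc1
    have hEm : max E0 0 ≤ max E0 0 * X ^ s := by
      have := mul_le_mul_of_nonneg_left hXs1 hmax0
      linarith [mul_one (max E0 0)]
    have hexp : K * X ^ s = X ^ s + max E0 0 * X ^ s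
        + (1 + c1) * (Real.sqrt (3 * c3 + 2) * X ^ s)
        + (1 + c1) * (Real.sqrt (2 * c2 + 3) * X ^ s) := by
      rw [hKdef]; ring
    have hq3 : 0 ≤ Real.sqrt (3 * c3 + 2) * X ^ s := mul_nonneg hsq3 hXs0.le
    have hq2 : 0 ≤ Real.sqrt (2 * c2 + 3) * X ^ s := mul_nonneg hsq2 hXs0.le
    linarith
  -- X ≤ K * X ^ s
  have hXK : X ≤ K * X ^ s := by
    have hsq3K : Real.sqrt (3 * c3 + 2) ≤ K := by
      rw [hKdef]
      linarith [mul_nonneg hc1 hsq3, mul_nonneg hc1 hsq2]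
    have hsq2K : Real.sqrt (2 * c2 + 3) ≤ K := by
      rw [hKdef]
      linarith [mul_nonneg hc1 hsq3, mul_nonneg hc1 hsq2]
    have haK : a ≤ K * X ^ s :=
      le_trans haa (mul_le_mul_of_nonneg_right hsq3K hXs0.le)
    have hbK : b ≤ K * X ^ s :=
      le_trans hbb (mul_le_mul_of_nonneg_right hsq2K hXs0.le)
    have h1K : 1 ≤ K * X ^ s :=
      le_trans hK1 (le_mul_of_one_le_right (by linarith) hXs1)
    exact max_le (max_le hee haK) (max_le hbK h1K)
  -- conclude
  have hXpow : X ^ (1 - s) ≤ K := by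
    have hsplit : X ^ (1 - s) * X ^ s = X := by
      rw [← Real.rpow_add hX0]; ring_nf; rw [Real.rpow_one]
    have h' : X ^ (1 - s) * X ^ s ≤ K * X ^ s := by rw [hsplit]; exact hXK
    exact le_of_mul_le_mul_right h' hXs0
  have hfin : X ≤ K ^ (1 / (1 - s)) := by
    have h := Real.rpow_le_rpow (by positivity) hXpow (by positivity : (0:ℝ) ≤ 1 / (1 - s))
    rwa [← Real.rpow_mul hX0.le, mul_one_div, div_self h1s.ne', Real.rpow_one] at h
  exact le_trans heX hfin
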